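/- Let u : [a, b] → ℝ be continuously differentiable and satisfy (1/2)·d/dx(u(x)²) ≤ -α·u(x)² + k·|u(x)| on [a,b], where α > 0, k ≥ 0. If |u(a)| ≤ μ where μ = max(|u(a)|, k/α), then |u(x)| ≤ μ for all x ∈ [a, b]. -/

import Mathlib

theorem stmt_2 (a b α k μ : ℝ) (hab : a < b) (hα : 0 < α) (hk : 0 ≤ k)
    (u : ℝ → ℝ) (hu : ContDiffOn ℝ 1 u (Set.Icc a b))
    (hineq : ∀ x ∈ Set.Icc a b,
      derivWithin (fun t => (u t) ^ 2) (Set.Icc a b) x / 2 ≤ -α * (u x) ^ 2 + k * |u x|)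
    (hμ : μ = max |u a| (k / α)) :
    ∀ x ∈ Set.Icc a b, |u x| ≤ μ := by
  have hμ0 : 0 ≤ μ := hμ ▸ le_trans (abs_nonneg _) (le_max_left _ _)
  have hμa : |u a| ≤ μ := hμ ▸ le_max_left _ _
  have hμk : k / α ≤ μ := hμ ▸ le_max_right _ _
  set v : ℝ → ℝ := fun t => (u t) ^ 2 with hv
  have hvd : DifferentiableOn ℝ v (Set.Icc a b) :=
    fun x hx => ((hu.differentiableOn one_ne_zero x hx).pow 2)
  have hvc : ContinuousOn v (Set.Icc a b) := hvd.continuousOn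
  -- main bound: v x ≤ μ² + ε for each ε > 0
  have key : ∀ ε > 0, ∀ x ∈ Set.Icc a b, v x ≤ μ ^ 2 + ε := by
    intro ε hε
    have := image_le_of_deriv_right_lt_deriv_boundary'
      (f := v) (f' := fun x => derivWithin v (Set.Icc a b) x)
      (a := a) (b := b) hvc
      (fun x hx => by
        have h1 : HasDerivWithinAt v (derivWithin v (Set.Icc a b) x) (Set.Icc a b) x :=
          (hvd x ⟨hx.1, hx.2.le⟩).hasDerivWithinAt
        exact h1.mono_of_mem_nhdsWithin
          (Icc_mem_nhdsGE_of_mem ⟨hx.1, hx.2⟩))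
      (B := fun _ => μ ^ 2 + ε) (B' := fun _ => 0)
      (by
        have : v a ≤ μ ^ 2 := by
          have : |u a| ^ 2 ≤ μ ^ 2 := pow_le_pow_left₀ (abs_nonneg _) hμa 2
          simpa [hv, sq_abs] using this
        show v a ≤ μ ^ 2 + ε
        linarith)
      continuousOn_const
      (fun x _ => (hasDerivAt_const x _).hasDerivWithinAt)
      (fun x hx hcontact => by
        have hxm : x ∈ Set.Icc a b := ⟨hx.1, hx.2.le⟩
        have h2 := hineq x hxm
        have h3 : (u x) ^ 2 = μ ^ 2 + ε := hcontact
        have habs : μ < |u x| := by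
          nlinarith [abs_nonneg (u x), sq_abs (u x)]
        have hkμ : k ≤ α * μ := by
          have := hμk
          rw [div_le_iff₀ hα] at this
          linarith
        have hpos : 0 < |u x| := lt_of_le_of_lt hμ0 habs
        have hkα : k < α * |u x| := lt_of_le_of_lt hkμ (by exact mul_lt_mul_of_pos_left habs hα)
        have hneg : -α * (u x) ^ 2 + k * |u x| < 0 := by
          nlinarith [mul_lt_mul_of_pos_right hkα hpos, sq_abs (u x)]
        show derivWithin v (Set.Icc a b) x < 0
        linarith)
    exact fun x hx => this hx
  intro x hx
  have hvle : v x ≤ μ ^ 2 := by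
    by_contra h
    push_neg at h
    have := key ((v x - μ ^ 2) / 2) (by linarith) x hx
    linarith
  have : |u x| ^ 2 ≤ μ ^ 2 := by simpa [sq_abs] using hvle
  nlinarith [abs_nonneg (u x)]
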